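/- Let n ≥ 1, x > 0 and w ≥ 0 with ⌊w/x⌋ ≥ ⌊n/2⌋ and w ≤ n·x. Then the minimum of f over Λ(w) equals n·x − w; i.e., f(v) ≥ n·x − w for all v ∈ Λ(w), and there exists v ∈ Λ(w) with f(v) = n·x − w. -/

import Mathlib

open Finset

/-- `f v = Σ_{1 ≤ l ≤ k ≤ n} (x − Σ_{i=l}^{k} v_i)⁺` (0-indexed over `Fin n`). -/
noncomputable def f (n : ℕ) (x : ℝ) (v : Fin n → ℝ) : ℝ :=
  ∑ l : Fin n, ∑ k : Fin n,
    if l ≤ k then max (x - ∑ i ∈ Finset.Icc l k, v i) 0 else 0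

/-- `Λ(w)`: nonnegative vectors with coordinate sum `w`. -/
def Lambda (n : ℕ) (w : ℝ) : Set (Fin n → ℝ) :=
  {v | (∀ i, 0 ≤ v i) ∧ ∑ i, v i = w}

lemma odd_count (n : ℕ) : ((Finset.range n).filter (fun i => i % 2 = 1)).card = n / 2 := by
  induction n with
  | zero => simp
  | succ m ih =>
    rw [Finset.range_add_one, Finset.filter_insert]
    by_cases h : m % 2 = 1
    · rw [if_pos h, Finset.card_insert_of_notMem (by simp), ih]; omega
    · rw [if_neg h, ih]; omega

/-- If `⌊w/x⌋ ≥ ⌊n/2⌋` and `w ≤ n·x`, the minimum of `f` over `Λ(w)` equals `n·x − w`. -/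
theorem statement8 (n : ℕ) (hn : 1 ≤ n) (x w : ℝ) (hx : 0 < x) (hw : 0 ≤ w)
    (hfloor : n / 2 ≤ ⌊w / x⌋₊) (hwn : w ≤ (n : ℝ) * x) :
    (∀ v ∈ Lambda n w, (n : ℝ) * x - w ≤ f n x v) ∧
    (∃ v ∈ Lambda n w, f n x v = (n : ℝ) * x - w) := by
  constructor
  · rintro v ⟨hpos, hsum⟩
    have key : ∀ l : Fin n, x - v l ≤ ∑ k : Fin n,
        if l ≤ k then max (x - ∑ i ∈ Finset.Icc l k, v i) 0 else 0 := by
      intro l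
      calc x - v l ≤ (if l ≤ l then max (x - ∑ i ∈ Finset.Icc l l, v i) 0 else 0) := by
            simp [Finset.Icc_self, le_max_left]
        _ ≤ _ := by
            apply Finset.single_le_sum (f := fun k : Fin n =>
              if l ≤ k then max (x - ∑ i ∈ Finset.Icc l k, v i) 0 else 0)
              (fun k _ => ?_) (Finset.mem_univ l)
            split <;> simp [le_max_right]
    calc (n : ℝ) * x - w = ∑ l : Fin n, (x - v l) := by
          rw [Finset.sum_sub_distrib, hsum, Finset.sum_const, Finset.card_univ,
            Fintype.card_fin, nsmul_eq_mul]
      _ ≤ f n x v := Finset.sum_le_sum fun l _ => key l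
  · set a : ℕ := n / 2 with ha
    set b : ℕ := n - n / 2 with hb
    have hbpos : 0 < b := by omega
    set c : ℝ := (w - a * x) / b with hc
    have haw : (a : ℝ) * x ≤ w := by
      have h1 : (a : ℝ) ≤ ⌊w / x⌋₊ := by exact_mod_cast hfloor
      have h2 : (⌊w / x⌋₊ : ℝ) ≤ w / x := Nat.floor_le (div_nonneg hw hx.le)
      calc (a : ℝ) * x ≤ (w / x) * x := by nlinarith
        _ = w := by field_simp
    have hc0 : 0 ≤ c := div_nonneg (by linarith) (by positivity)
    have hcx : c ≤ x := by
      rw [hc, div_le_iff₀ (by exact_mod_cast hbpos)]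
      have hab : a + b = n := by omega
      have h3 : ((a + b : ℕ) : ℝ) = n := by rw [hab]
      push_cast at h3
      nlinarith
    set v : Fin n → ℝ := fun i => if i.val % 2 = 1 then x else c with hv
    have hvpos : ∀ i, 0 ≤ v i := by
      intro i; rw [hv]; dsimp only; split
      · exact hx.le
      · exact hc0
    have hvle : ∀ i, v i ≤ x := by
      intro i; rw [hv]; dsimp only; split
      · exact le_refl x
      · exact hcx
    have hvsum : ∑ i, v i = w := by
      rw [hv, Fin.sum_univ_eq_sum_range (fun i => if i % 2 = 1 then x else c) n,
        Finset.sum_ite, Finset.sum_const, Finset.sum_const, odd_count]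
      have hcard : ((Finset.range n).filter (fun i => ¬ i % 2 = 1)).card = b := by
        have := Finset.card_filter_add_card_filter_not
          (s := Finset.range n) (p := fun i => i % 2 = 1)
        rw [odd_count] at this
        simp only [Finset.card_range] at this
        omega
      rw [hcard, nsmul_eq_mul, nsmul_eq_mul, hc]
      field_simp
      rw [← ha]; ring
    refine ⟨v, ⟨hvpos, hvsum⟩, ?_⟩
    have hinterval : ∀ l k : Fin n, l < k → x ≤ ∑ i ∈ Finset.Icc l k, v i := by
      intro l k hlk
      have hj : ∃ j : Fin n, j ∈ Finset.Icc l k ∧ v j = x := by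
        by_cases h : l.val % 2 = 1
        · exact ⟨l, Finset.mem_Icc.2 ⟨le_refl l, hlk.le⟩, by rw [hv]; simp [h]⟩
        · refine ⟨⟨l.val + 1, lt_of_le_of_lt (Nat.succ_le_of_lt hlk) k.isLt⟩, ?_, ?_⟩
          · rw [Finset.mem_Icc]
            constructor
            · exact Fin.le_def.2 (Nat.le_succ _)
            · exact Fin.le_def.2 (Nat.succ_le_of_lt hlk)
          · rw [hv]; simp; omega
      obtain ⟨j, hjm, hjx⟩ := hj
      calc x = v j := hjx.symm
        _ ≤ _ := Finset.single_le_sum (fun i _ => hvpos i) hjm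
    have : f n x v = ∑ l : Fin n, (x - v l) := by
      rw [f]
      apply Finset.sum_congr rfl
      intro l _
      rw [Finset.sum_eq_single l]
      · simp [Finset.Icc_self, max_eq_left (sub_nonneg.2 (hvle l))]
      · intro k _ hk
        rcases lt_or_ge l k with h | h
        · rw [if_pos h.le, max_eq_right (by linarith [hinterval l k h])]
        · rw [if_neg (fun hle => hk (le_antisymm h hle))]
      · intro h; exact absurd (Finset.mem_univ l) h
    rw [this, Finset.sum_sub_distrib, hvsum, Finset.sum_const, Finset.card_univ,
      Fintype.card_fin, nsmul_eq_mul]
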